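/- arXiv:1703.06605 — 4 statements merged into one kernel-verified Lean document; each statement's English description precedes it below -/
import Mathlib

section
/- Let ε ∈ [0,1) and w, v ∈ ℂⁿ with minₖ |wₖ| ≥ 1 - ε and minₖ |vₖ| ≥ 1 - ε. Define 𝒫 : ℂⁿ → ℂⁿ by (𝒫u)ₖ = uₖ/|uₖ| (for nonzero entries). Then d₂(𝒫w, 𝒫v) ≤ (1 - ε)^{-1} d₂(w, v). -/
noncomputable section

namespace PhaseSync

open Complex

variable {n : ℕ}

/-- Euclidean (ℓ²) norm on `Fin n → ℂ`. -/
def l2norm (v : Fin n → ℂ) : ℝ :=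
  Real.sqrt (∑ k, ‖v k‖ ^ 2)

/-- Entrywise sup (ℓ∞) norm on `Fin n → ℂ`. -/
def linfnorm (v : Fin n → ℂ) : ℝ :=
  ⨆ k, ‖v k‖

/-- Hermitian inner product `x*y = ∑ₖ conj(xₖ) yₖ`. -/
def herm (x y : Fin n → ℂ) : ℂ :=
  ∑ k, (starRingEnd ℂ) (x k) * y k

/-- Distance up to a global phase: `d₂(x,y) = inf_θ ‖x e^{iθ} - y‖₂`. -/
def d2 (x y : Fin n → ℂ) : ℝ :=
  ⨅ θ : ℝ, l2norm (fun k => Complex.exp (θ * Complex.I) * x k - y k)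

/-- Sup-norm distance up to a global phase. -/
def dinf (x y : Fin n → ℂ) : ℝ :=
  ⨅ θ : ℝ, linfnorm (fun k => Complex.exp (θ * Complex.I) * x k - y k)

/-- ℓ² operator (spectral) norm of a matrix. -/
def opNorm (A : Matrix (Fin n) (Fin n) ℂ) : ℝ :=
  ⨆ u : {u : Fin n → ℂ // l2norm u = 1}, l2norm (A.mulVec u)

/-- Entrywise projection to the unit circle (on nonzero entries). -/
def proj (v : Fin n → ℂ) : Fin n → ℂ :=
  fun k => v k / (‖v k‖ : ℂ)

/-- The rank-one matrix `z z*`. -/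
def outer (z : Fin n → ℂ) : Matrix (Fin n) (Fin n) ℂ :=
  Matrix.of fun i j => z i * (starRingEnd ℂ) (z j)

/-- The operator `ℒ v = (z*v/n) z + (σ/n) W v`. -/
def Lop (z : Fin n → ℂ) (σ : ℝ) (W : Matrix (Fin n) (Fin n) ℂ) (v : Fin n → ℂ) : Fin n → ℂ :=
  (herm z v / (n : ℂ)) • z + (σ / (n : ℝ)) • W.mulVec v


private lemma key_ineq (r : ℝ) (hr : 0 < r) (z₁ z₂ : ℂ) (h1 : r ≤ ‖z₁‖)
    (h2 : r ≤ ‖z₂‖) :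
    ‖z₁ / (‖z₁‖ : ℂ) - z₂ / (‖z₂‖ : ℂ)‖
      ≤ r⁻¹ * ‖z₁ - z₂‖ := by
  set a := ‖z₁‖ with ha'
  set b := ‖z₂‖ with hb'
  have ha : 0 < a := lt_of_lt_of_le hr h1
  have hb : 0 < b := lt_of_lt_of_le hr h2
  apply le_of_pow_le_pow_left₀ two_ne_zero (by positivity)
  have ht : |(z₁ * (starRingEnd ℂ) z₂).re| ≤ a * b := by
    calc |(z₁ * (starRingEnd ℂ) z₂).re| ≤ ‖z₁ * (starRingEnd ℂ) z₂‖ :=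
          Complex.abs_re_le_norm _
      _ = a * b := by rw [norm_mul, Complex.norm_conj]
  set t := (z₁ * (starRingEnd ℂ) z₂).re with ht'
  have e1 : (‖z₁ / (a : ℂ) - z₂ / (b : ℂ)‖) ^ 2 = 2 - 2 * t / (a * b) := by
    rw [Complex.sq_norm, Complex.normSq_sub]
    have n1 : Complex.normSq (z₁ / (a : ℂ)) = 1 := by
      rw [Complex.normSq_div, Complex.normSq_ofReal, ← Complex.sq_norm, ← ha']
      field_simp
    have n2 : Complex.normSq (z₂ / (b : ℂ)) = 1 := by
      rw [Complex.normSq_div, Complex.normSq_ofReal, ← Complex.sq_norm, ← hb']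
      field_simp
    have n3 : (z₁ / (a : ℂ) * (starRingEnd ℂ) (z₂ / (b : ℂ))).re = t / (a * b) := by
      rw [map_div₀, Complex.conj_ofReal, div_mul_div_comm, ← Complex.ofReal_mul,
        Complex.div_ofReal_re]
    rw [n1, n2, n3]; ring
  have e2 : (‖z₁ - z₂‖) ^ 2 = a ^ 2 + b ^ 2 - 2 * t := by
    rw [Complex.sq_norm, Complex.normSq_sub, ← Complex.sq_norm, ← Complex.sq_norm, ← ha', ← hb']
  rw [e1, mul_pow, e2]
  have hab : (0:ℝ) < a * b := mul_pos ha hb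
  have htab : t ≤ a * b := (abs_le.mp ht).2
  have habr2 : r ^ 2 ≤ a * b := by nlinarith
  have expand : 2 - 2 * t / (a * b) = (2 * (a * b) - 2 * t) / (a * b) := by field_simp
  rw [expand, div_le_iff₀ hab, inv_pow, inv_mul_eq_div, div_mul_eq_mul_div,
    le_div_iff₀ (by positivity)]
  nlinarith [mul_nonneg (sub_nonneg.mpr habr2) (sub_nonneg.mpr htab),
    mul_nonneg hab.le (sq_nonneg (a - b))]

private lemma l2norm_le_of_pointwise {n : ℕ} (c : ℝ) (hc : 0 ≤ c) (f g : Fin n → ℂ)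
    (h : ∀ k, ‖f k‖ ≤ c * ‖g k‖) :
    l2norm f ≤ c * l2norm g := by
  unfold l2norm
  rw [← Real.sqrt_sq hc, ← Real.sqrt_mul (sq_nonneg c), Finset.mul_sum]
  apply Real.sqrt_le_sqrt
  apply Finset.sum_le_sum
  intro k _
  calc ‖f k‖ ^ 2 ≤ (c * ‖g k‖) ^ 2 := by
        have := h k
        have := norm_nonneg (f k)
        nlinarith
    _ = c ^ 2 * ‖g k‖ ^ 2 := by ring

/-- entrywise projection `𝒫` is `(1-ε)⁻¹`-Lipschitz for `d₂` on vectors whose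
entries all have modulus at least `1 - ε`. -/
theorem stmt3 (n : ℕ) (ε : ℝ) (hε0 : 0 ≤ ε) (hε1 : ε < 1) (w v : Fin n → ℂ)
    (hw : ∀ k, 1 - ε ≤ ‖w k‖) (hv : ∀ k, 1 - ε ≤ ‖v k‖) :
    d2 (proj w) (proj v) ≤ (1 - ε)⁻¹ * d2 w v := by
  set r := 1 - ε with hrdef
  have hr : 0 < r := by simp [hrdef]; linarith
  have hstep : ∀ θ : ℝ,
      l2norm (fun k => Complex.exp (θ * Complex.I) * proj w k - proj v k)
        ≤ r⁻¹ * l2norm (fun k => Complex.exp (θ * Complex.I) * w k - v k) := by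
    intro θ
    apply l2norm_le_of_pointwise _ (by positivity)
    intro k
    have he : ‖Complex.exp (θ * Complex.I)‖ = 1 :=
      Complex.norm_exp_ofReal_mul_I θ
    have habs : ‖Complex.exp (θ * Complex.I) * w k‖ = ‖w k‖ := by
      rw [norm_mul, he, one_mul]
    have hkey := key_ineq r hr (Complex.exp (θ * Complex.I) * w k) (v k)
      (by rw [habs]; exact hw k) (hv k)
    rw [habs] at hkey
    have hproj : Complex.exp (θ * Complex.I) * proj w k - proj v k
        = Complex.exp (θ * Complex.I) * w k / (‖w k‖ : ℂ)
          - v k / (‖v k‖ : ℂ) := by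
      simp [proj, mul_div_assoc]
    rw [hproj]
    exact hkey
  have hbdd : BddBelow (Set.range fun θ : ℝ =>
      l2norm (fun k => Complex.exp (θ * Complex.I) * proj w k - proj v k)) := by
    refine ⟨0, ?_⟩
    rintro x ⟨θ, rfl⟩
    exact Real.sqrt_nonneg _
  rw [show (1 - ε)⁻¹ * d2 w v = d2 w v / r by rw [hrdef]; ring,
    le_div_iff₀ hr]
  unfold d2
  apply le_ciInf
  intro θ
  calc (⨅ θ' : ℝ, l2norm fun k => Complex.exp (↑θ' * Complex.I) * proj w k - proj v k) * r
      ≤ (l2norm fun k => Complex.exp (↑θ * Complex.I) * proj w k - proj v k) * r := by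
        exact mul_le_mul_of_nonneg_right (ciInf_le hbdd θ) hr.le
    _ ≤ r⁻¹ * (l2norm fun k => Complex.exp (↑θ * Complex.I) * w k - v k) * r :=
        mul_le_mul_of_nonneg_right (hstep θ) hr.le
    _ = l2norm fun k => Complex.exp (↑θ * Complex.I) * w k - v k := by
        field_simp

end PhaseSync
end
end

section
/- Let A, E ∈ ℂ^{n×n} be Hermitian, Ā = A + E, and δ = λ₁(A) - λ₂(A) the gap between the top two eigenvalues of A. Let u, ū be leading (unit-eigenvalue) eigenvectors of A and Ā respectively, normalized so ‖u‖₂ = ‖ū‖₂ = √n. If δ > ‖E‖₂ (operator norm), then d₂(ū, u) ≤ √2 ‖E u‖₂ / (δ - ‖E‖₂). -/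
noncomputable section

namespace PhaseSync

open Complex
open Matrix

variable {n : ℕ}

def toE : (Fin n → ℂ) → EuclideanSpace ℂ (Fin n) := (WithLp.equiv 2 _).symm
def fromE : EuclideanSpace ℂ (Fin n) → (Fin n → ℂ) := (WithLp.equiv 2 _)

@[simp] lemma toE_apply (v : Fin n → ℂ) (i : Fin n) : toE v i = v i := rfl

@[simp] lemma toE_fromE (x : EuclideanSpace ℂ (Fin n)) : toE (fromE x) = x := rfl
@[simp] lemma fromE_toE (v : Fin n → ℂ) : fromE (toE v) = v := rfl

lemma l2norm_eq (v : Fin n → ℂ) : l2norm v = ‖toE v‖ := by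
  rw [EuclideanSpace.norm_eq, l2norm]; rfl

lemma herm_eq (x y : Fin n → ℂ) : herm x y = @inner ℂ _ _ (toE x) (toE y) := by
  rw [PiLp.inner_apply, herm]; simp only [RCLike.inner_apply]
  exact Finset.sum_congr rfl fun i _ => mul_comm _ _

lemma herm_mulVec_left {M : Matrix (Fin n) (Fin n) ℂ} (hM : M.IsHermitian)
    (x y : Fin n → ℂ) : herm (M.mulVec x) y = herm x (M.mulVec y) := by
  simp only [herm]
  calc ∑ k, (starRingEnd ℂ) ((M *ᵥ x) k) * y k
      = dotProduct (star (M *ᵥ x)) y := rfl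
    _ = dotProduct (star x) (M *ᵥ y) := by
        rw [Matrix.star_mulVec, ← Matrix.dotProduct_mulVec, hM.eq]
    _ = _ := rfl

lemma inner_mulVec_swap {M : Matrix (Fin n) (Fin n) ℂ} (hM : M.IsHermitian)
    (x y : EuclideanSpace ℂ (Fin n)) :
    @inner ℂ _ _ (toE (M.mulVec (fromE x))) y = @inner ℂ _ _ x (toE (M.mulVec (fromE y))) := by
  have h := herm_mulVec_left hM (fromE x) (fromE y)
  rw [herm_eq, herm_eq] at h
  exact h

/-- eigen-equation in Euclidean space form -/
lemma eigen_toE {M : Matrix (Fin n) (Fin n) ℂ} (hM : M.IsHermitian) (i : Fin n) :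
    toE (M.mulVec (fromE (hM.eigenvectorBasis i)))
      = (hM.eigenvalues i : ℂ) • hM.eigenvectorBasis i := by
  have h := hM.mulVec_eigenvectorBasis i
  have : M.mulVec (fromE (hM.eigenvectorBasis i))
      = hM.eigenvalues i • fromE (hM.eigenvectorBasis i) := h
  rw [this]
  ext k
  simp [toE, fromE, Complex.real_smul]

/-- coefficient transformation under `M` -/
lemma inner_basis_mulVec {M : Matrix (Fin n) (Fin n) ℂ} (hM : M.IsHermitian)
    (x : EuclideanSpace ℂ (Fin n)) (i : Fin n) :
    @inner ℂ _ _ (hM.eigenvectorBasis i) (toE (M.mulVec (fromE x)))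
      = (hM.eigenvalues i : ℂ) * @inner ℂ _ _ (hM.eigenvectorBasis i) x := by
  rw [← inner_mulVec_swap hM, eigen_toE hM i, inner_smul_left]
  simp

/-- Parseval for the inner product -/
lemma inner_eq_sum_basis {B : OrthonormalBasis (Fin n) ℂ (EuclideanSpace ℂ (Fin n))}
    (x y : EuclideanSpace ℂ (Fin n)) :
    @inner ℂ _ _ x y = ∑ i, (starRingEnd ℂ) (@inner ℂ _ _ (B i) x) * @inner ℂ _ _ (B i) y := by
  rw [← LinearIsometryEquiv.inner_map_map B.repr x y, PiLp.inner_apply]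
  simp [RCLike.inner_apply, OrthonormalBasis.repr_apply_apply]
  exact Finset.sum_congr rfl fun i _ => mul_comm _ _

lemma conj_mul_self (c : ℂ) : (starRingEnd ℂ) c * c = ((‖c‖ : ℝ) : ℂ) ^ 2 := by
  rw [mul_comm, Complex.mul_conj, Complex.normSq_eq_norm_sq]; push_cast; ring

lemma norm_sq_eq_sum_basis {B : OrthonormalBasis (Fin n) ℂ (EuclideanSpace ℂ (Fin n))}
    (x : EuclideanSpace ℂ (Fin n)) :
    ‖x‖ ^ 2 = ∑ i, ‖@inner ℂ _ _ (B i) x‖ ^ 2 := by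
  have h : ((‖x‖ ^ 2 : ℝ) : ℂ) = @inner ℂ _ _ x x := by
    push_cast
    exact (inner_self_eq_norm_sq_to_K x).symm
  rw [@inner_eq_sum_basis n B x x] at h
  have h2 : ((‖x‖ ^ 2 : ℝ) : ℂ) = ((∑ i, ‖@inner ℂ _ _ (B i) x‖ ^ 2 : ℝ) : ℂ) := by
    rw [h]; push_cast
    exact Finset.sum_congr rfl fun i _ => conj_mul_self _
  exact_mod_cast h2

/-- Rayleigh quotient expansion -/
lemma rayleigh_expand {M : Matrix (Fin n) (Fin n) ℂ} (hM : M.IsHermitian)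
    (x : EuclideanSpace ℂ (Fin n)) :
    (@inner ℂ _ _ x (toE (M.mulVec (fromE x)))).re
      = ∑ i, hM.eigenvalues i * ‖@inner ℂ _ _ (hM.eigenvectorBasis i) x‖ ^ 2 := by
  have key : @inner ℂ _ _ x (toE (M.mulVec (fromE x)))
      = ((∑ i, hM.eigenvalues i * ‖@inner ℂ _ _ (hM.eigenvectorBasis i) x‖ ^ 2 : ℝ) : ℂ) := by
    rw [@inner_eq_sum_basis n hM.eigenvectorBasis]
    push_cast
    refine Finset.sum_congr rfl fun i _ => ?_
    rw [inner_basis_mulVec hM x i]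
    set c := @inner ℂ _ _ (hM.eigenvectorBasis i) x with hc
    calc (starRingEnd ℂ) c * ((hM.eigenvalues i : ℂ) * c)
        = (hM.eigenvalues i : ℂ) * ((starRingEnd ℂ) c * c) := by ring
      _ = (hM.eigenvalues i : ℂ) * ((‖c‖ : ℝ) : ℂ) ^ 2 := by rw [conj_mul_self]
  rw [key, Complex.ofReal_re]

open scoped Matrix.Norms.L2Operator

lemma opNorm_bddAbove (E : Matrix (Fin n) (Fin n) ℂ) :
    BddAbove (Set.range fun u : {u : Fin n → ℂ // l2norm u = 1} => l2norm (E.mulVec u)) := by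
  refine ⟨‖E‖, ?_⟩
  rintro x ⟨⟨u, hu⟩, rfl⟩
  simp only [l2norm_eq] at hu ⊢
  calc ‖toE (E.mulVec u)‖ = ‖(EuclideanSpace.equiv (Fin n) ℂ).symm (E *ᵥ (toE u))‖ := rfl
    _ ≤ ‖E‖ * ‖toE u‖ := Matrix.l2_opNorm_mulVec E (toE u)
    _ = ‖E‖ := by rw [hu, mul_one]

lemma opNorm_nonneg (E : Matrix (Fin n) (Fin n) ℂ) : 0 ≤ opNorm E := by
  rcases isEmpty_or_nonempty {u : Fin n → ℂ // l2norm u = 1} with h | h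
  · rw [opNorm, iSup_of_empty']
    exact Real.sSup_empty.ge
  · obtain ⟨u⟩ := h
    have h0 : 0 ≤ l2norm (E.mulVec u) := Real.sqrt_nonneg _
    exact le_trans h0 (le_ciSup (opNorm_bddAbove E) u)

lemma l2norm_mulVec_le (E : Matrix (Fin n) (Fin n) ℂ) (v : Fin n → ℂ) :
    l2norm (E.mulVec v) ≤ opNorm E * l2norm v := by
  rcases eq_or_ne (toE v) 0 with hv | hv
  · have : v = 0 := by rw [← fromE_toE v, hv]; rfl
    simp only [this, Matrix.mulVec_zero]
    have : l2norm (0 : Fin n → ℂ) = 0 := by simp [l2norm]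
    rw [this, mul_zero]
  · have hvn : ‖toE v‖ ≠ 0 := norm_ne_zero_iff.2 hv
    set w : Fin n → ℂ := (‖toE v‖ : ℂ)⁻¹ • v with hw
    have hwn : l2norm w = 1 := by
      rw [l2norm_eq]
      have : toE w = (‖toE v‖ : ℂ)⁻¹ • toE v := rfl
      rw [this, norm_smul]
      simp [hvn]
    have h1 : l2norm (E.mulVec w) ≤ opNorm E := le_ciSup (opNorm_bddAbove E) ⟨w, hwn⟩
    have h2 : E.mulVec w = (‖toE v‖ : ℂ)⁻¹ • E.mulVec v := by
      rw [hw, Matrix.mulVec_smul]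
    rw [h2] at h1
    have h3 : l2norm ((‖toE v‖ : ℂ)⁻¹ • E.mulVec v) = ‖toE v‖⁻¹ * l2norm (E.mulVec v) := by
      rw [l2norm_eq, l2norm_eq]
      have : toE ((‖toE v‖ : ℂ)⁻¹ • E.mulVec v) = (‖toE v‖ : ℂ)⁻¹ • toE (E.mulVec v) := rfl
      rw [this, norm_smul]
      simp
    rw [h3] at h1
    rw [l2norm_eq (E.mulVec v), l2norm_eq v] at *
    calc ‖toE (E.mulVec v)‖ = (‖toE v‖⁻¹ * ‖toE (E.mulVec v)‖) * ‖toE v‖ := by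
          field_simp
    _ ≤ opNorm E * ‖toE v‖ := by
          apply mul_le_mul_of_nonneg_right h1 (norm_nonneg _)

lemma eq_zero_of_inner_basis {B : OrthonormalBasis (Fin n) ℂ (EuclideanSpace ℂ (Fin n))}
    {x : EuclideanSpace ℂ (Fin n)} (h : ∀ i, @inner ℂ _ _ (B i) x = 0) : x = 0 := by
  have h2 : ‖x‖ ^ 2 = 0 := by
    rw [norm_sq_eq_sum_basis (B := B)]
    exact Finset.sum_eq_zero fun i _ => by rw [h i]; simp
  have : ‖x‖ = 0 := by
    have := sq_eq_zero_iff.mp h2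
    exact this
  exact norm_eq_zero.mp this


set_option maxHeartbeats 2000000 in
/-- Davis–Kahan type bound. Here `lam1` is the largest eigenvalue of the
Hermitian matrix `A` (attained at index `i0`), `lam2` bounds all other eigenvalues,
`u` is a leading eigenvector of `A` and `ub` a leading eigenvector of `A + E`,
both with norm `√n`. -/
theorem stmt4 (n : ℕ) (A E : Matrix (Fin n) (Fin n) ℂ)
    (hA : A.IsHermitian) (hE : E.IsHermitian)
    (lam1 lam2 : ℝ) (i0 : Fin n)
    (h1 : hA.eigenvalues i0 = lam1)
    (hmax : ∀ i, hA.eigenvalues i ≤ lam1)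
    (h2 : ∀ i, i ≠ i0 → hA.eigenvalues i ≤ lam2)
    (hgap : opNorm E < lam1 - lam2)
    (u ub : Fin n → ℂ)
    (hu : A.mulVec u = (lam1 : ℂ) • u) (hun : l2norm u = Real.sqrt n)
    (mu : ℝ)
    (hub : (A + E).mulVec ub = (mu : ℂ) • ub) (hubn : l2norm ub = Real.sqrt n)
    (hmu : ∀ ν : ℝ, (∃ v : Fin n → ℂ, v ≠ 0 ∧ (A + E).mulVec v = (ν : ℂ) • v) → ν ≤ mu) :
    d2 ub u ≤ Real.sqrt 2 * l2norm (E.mulVec u) / (lam1 - lam2 - opNorm E) := by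
  have hε : 0 ≤ opNorm E := opNorm_nonneg E
  have hδ : 0 < lam1 - lam2 - opNorm E := by linarith
  rcases Nat.eq_zero_or_pos n with hn | hn
  · subst hn
    have hz : ∀ v : Fin 0 → ℂ, l2norm v = 0 := fun v => by simp [l2norm]
    have hd : d2 ub u = 0 := by
      rw [d2]
      simp only [hz, ciInf_const]
    rw [hd, hz (E.mulVec u)]
    positivity
  have hl21 : lam2 < lam1 := by linarith
  have hn' : (0:ℝ) < n := by exact_mod_cast hn
  have hAE : (A + E).IsHermitian := hA.add hE
  have hnormu : ‖toE u‖ = Real.sqrt n := by rw [← l2norm_eq]; exact hun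
  have hnormub : ‖toE ub‖ = Real.sqrt n := by rw [← l2norm_eq]; exact hubn
  have hnormu2 : ‖toE u‖^2 = n := by rw [hnormu, Real.sq_sqrt (Nat.cast_nonneg n)]
  have hnormub2 : ‖toE ub‖^2 = n := by rw [hnormub, Real.sq_sqrt (Nat.cast_nonneg n)]
  have hsq : (0:ℝ) < Real.sqrt n := Real.sqrt_pos.mpr hn'
  -- orthogonality of u to non-top eigenvectors
  have F_uortho : ∀ i, i ≠ i0 → @inner ℂ _ _ (hA.eigenvectorBasis i) (toE u) = 0 := by
    intro i hi
    have h := inner_basis_mulVec hA (toE u) i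
    rw [fromE_toE] at h
    have h' : toE (A.mulVec u) = (lam1 : ℂ) • toE u := by rw [hu]; rfl
    rw [h', inner_smul_right] at h
    have hne : (hA.eigenvalues i : ℂ) ≠ (lam1 : ℂ) := by
      have : hA.eigenvalues i < lam1 := lt_of_le_of_lt (h2 i hi) hl21
      exact_mod_cast ne_of_lt this
    have := sub_eq_zero.mpr h.symm
    rw [← sub_mul] at this
    rcases mul_eq_zero.mp this with h'' | h''
    · exact absurd (sub_eq_zero.mp h'') hne
    · exact h''
  -- each eigenvalue of A+E is at most mu
  have hnu_le : ∀ i, hAE.eigenvalues i ≤ mu := by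
    intro i
    apply hmu
    refine ⟨fromE (hAE.eigenvectorBasis i), ?_, ?_⟩
    · intro h0
      have : hAE.eigenvectorBasis i = 0 := by
        have := congrArg toE h0
        rw [toE_fromE] at this; exact this
      have hn1 : ‖hAE.eigenvectorBasis i‖ = 1 := hAE.eigenvectorBasis.orthonormal.1 i
      rw [this] at hn1; simp at hn1
    · have h := hAE.mulVec_eigenvectorBasis i
      have : (A+E).mulVec (fromE (hAE.eigenvectorBasis i))
          = hAE.eigenvalues i • fromE (hAE.eigenvectorBasis i) := h
      rw [this]
      funext k
      simp [Complex.real_smul]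
  -- Rayleigh upper bound by mu
  have F_ray_mu : ∀ x : EuclideanSpace ℂ (Fin n),
      (@inner ℂ _ _ x (toE ((A+E).mulVec (fromE x)))).re ≤ mu * ‖x‖^2 := by
    intro x
    rw [rayleigh_expand hAE, norm_sq_eq_sum_basis (B := hAE.eigenvectorBasis), Finset.mul_sum]
    apply Finset.sum_le_sum
    intro i _
    exact mul_le_mul_of_nonneg_right (hnu_le i) (by positivity)
  -- Rayleigh bound on u-orthogonal complement
  have F_ray_A : ∀ x : EuclideanSpace ℂ (Fin n), @inner ℂ _ _ (toE u) x = 0 →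
      (@inner ℂ _ _ x (toE (A.mulVec (fromE x)))).re ≤ lam2 * ‖x‖^2 := by
    intro x hx
    have hgamma : toE u = (@inner ℂ _ _ (hA.eigenvectorBasis i0) (toE u)) • hA.eigenvectorBasis i0 := by
      conv_lhs => rw [← hA.eigenvectorBasis.sum_repr (toE u)]
      rw [Finset.sum_eq_single i0]
      · rw [OrthonormalBasis.repr_apply_apply]
      · intro i _ hi
        rw [OrthonormalBasis.repr_apply_apply, F_uortho i hi, zero_smul]
      · intro h; exact absurd (Finset.mem_univ i0) h
    have hgne : (@inner ℂ _ _ (hA.eigenvectorBasis i0) (toE u)) ≠ 0 := by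
      intro h0
      rw [h0, zero_smul] at hgamma
      rw [hgamma] at hnormu
      simp at hnormu
      linarith
    have hc0 : @inner ℂ _ _ (hA.eigenvectorBasis i0) x = 0 := by
      rw [hgamma, inner_smul_left] at hx
      rcases mul_eq_zero.mp hx with h'' | h''
      · exact absurd (star_eq_zero.mp h'') hgne
      · exact h''
    rw [rayleigh_expand hA, norm_sq_eq_sum_basis (B := hA.eigenvectorBasis), Finset.mul_sum]
    apply Finset.sum_le_sum
    intro i _
    rcases eq_or_ne i i0 with rfl | hi
    · rw [hc0]; simp
    · exact mul_le_mul_of_nonneg_right (h2 i hi) (by positivity)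
  -- quadratic form bound for E
  have F_E_bound : ∀ x : EuclideanSpace ℂ (Fin n),
      |(@inner ℂ _ _ x (toE (E.mulVec (fromE x)))).re| ≤ opNorm E * ‖x‖^2 := by
    intro x
    calc |(@inner ℂ _ _ x (toE (E.mulVec (fromE x)))).re|
        ≤ ‖@inner ℂ _ _ x (toE (E.mulVec (fromE x)))‖ := Complex.abs_re_le_norm _
      _ = ‖@inner ℂ _ _ x (toE (E.mulVec (fromE x)))‖ := rfl
      _ ≤ ‖x‖ * ‖toE (E.mulVec (fromE x))‖ := norm_inner_le_norm _ _
      _ = ‖x‖ * l2norm (E.mulVec (fromE x)) := by rw [l2norm_eq]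
      _ ≤ ‖x‖ * (opNorm E * l2norm (fromE x)) := by
          exact mul_le_mul_of_nonneg_left (l2norm_mulVec_le E _) (norm_nonneg x)
      _ = opNorm E * ‖x‖^2 := by rw [l2norm_eq, toE_fromE]; ring
  -- lower bound on mu
  have F_mu_lb : lam1 - opNorm E ≤ mu := by
    have h1 := F_ray_mu (toE u)
    rw [fromE_toE, hnormu2] at h1
    have h3 : toE ((A+E).mulVec u) = (lam1:ℂ) • toE u + toE (E.mulVec u) := by
      rw [Matrix.add_mulVec, hu]; rfl
    rw [h3, inner_add_right, inner_smul_right] at h1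
    have h4 : (@inner ℂ _ _ (toE u) (toE u)) = ((n:ℝ) : ℂ) := by
      rw [inner_self_eq_norm_sq_to_K]
      rw [show (RCLike.ofReal ‖toE u‖ : ℂ) ^ 2 = ((n:ℝ) : ℂ) from by
        rw [← RCLike.ofReal_pow, hnormu2]; norm_cast]
    have h5 := F_E_bound (toE u)
    rw [fromE_toE, hnormu2] at h5
    have h6 : ((lam1:ℂ) * ((n:ℝ):ℂ)).re = lam1 * n := by
      push_cast; simp
    rw [h4, Complex.add_re, h6] at h1
    have h7 : -(opNorm E * n) ≤ (@inner ℂ _ _ (toE u) (toE (E.mulVec u))).re := by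
      have := abs_le.mp h5
      exact this.1
    have : lam1 * n - opNorm E * n ≤ mu * n := by linarith
    have := (mul_le_mul_iff_of_pos_right hn').mp (by linarith : (lam1 - opNorm E) * n ≤ mu * n)
    linarith
  set a : ℂ := herm ub u with ha_def
  have ha_inner : a = @inner ℂ _ _ (toE ub) (toE u) := herm_eq ub u
  have hab : ‖a‖ ≤ n := by
    rw [ha_inner]
    calc ‖@inner ℂ _ _ (toE ub) (toE u)‖
        = ‖@inner ℂ _ _ (toE ub) (toE u)‖ := rfl
      _ ≤ ‖toE ub‖ * ‖toE u‖ := norm_inner_le_norm _ _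
      _ = n := by rw [hnormu, hnormub, Real.mul_self_sqrt (Nat.cast_nonneg n)]
  set w : EuclideanSpace ℂ (Fin n) := toE u - (a / n : ℂ) • toE ub with hw_def
  have hwub : @inner ℂ _ _ (toE ub) w = 0 := by
    rw [hw_def, inner_sub_right, inner_smul_right, ← ha_inner,
      inner_self_eq_norm_sq_to_K]
    rw [show (RCLike.ofReal ‖toE ub‖ : ℂ) ^ 2 = ((n:ℝ) : ℂ) from by
      rw [← RCLike.ofReal_pow, hnormub2]; norm_cast]
    have h0 : (n:ℂ) ≠ 0 := by exact_mod_cast ne_of_gt hn'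
    field_simp
    push_cast; ring
  -- key spectral separation claim
  have horthC : ∀ k l : Fin n, @inner ℂ _ _ (hAE.eigenvectorBasis k) (hAE.eigenvectorBasis l)
      = if k = l then 1 else 0 := fun k l =>
    orthonormal_iff_ite.mp hAE.eigenvectorBasis.orthonormal k l
  have hnuw : ∀ i, @inner ℂ _ _ (hAE.eigenvectorBasis i) w ≠ 0 →
      hAE.eigenvalues i ≤ lam2 + opNorm E := by
    have aux : ∀ (i j : Fin n), lam2 + opNorm E < hAE.eigenvalues i →
        lam2 + opNorm E < hAE.eigenvalues j →
        ∀ x : EuclideanSpace ℂ (Fin n), x ≠ 0 → @inner ℂ _ _ (toE u) x = 0 →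
        (∀ k, k ≠ i → k ≠ j → @inner ℂ _ _ (hAE.eigenvectorBasis k) x = 0) → False := by
      intro i j hi hj x hx0 hxu hk
      have hup : (@inner ℂ _ _ x (toE ((A+E).mulVec (fromE x)))).re
          ≤ (lam2 + opNorm E) * ‖x‖^2 := by
        have hsplit : toE ((A+E).mulVec (fromE x))
            = toE (A.mulVec (fromE x)) + toE (E.mulVec (fromE x)) := by
          rw [Matrix.add_mulVec]; rfl
        rw [hsplit, inner_add_right, Complex.add_re]
        have h5 := (abs_le.mp (F_E_bound x)).2
        have h6 := F_ray_A x hxu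
        nlinarith [sq_nonneg ‖x‖]
      have hlow : (lam2 + opNorm E) * ‖x‖^2
          < (@inner ℂ _ _ x (toE ((A+E).mulVec (fromE x)))).re := by
        rw [rayleigh_expand hAE, norm_sq_eq_sum_basis (B := hAE.eigenvectorBasis), Finset.mul_sum]
        obtain ⟨k0, hk0⟩ : ∃ k, @inner ℂ _ _ (hAE.eigenvectorBasis k) x ≠ 0 := by
          by_contra hall
          push_neg at hall
          exact hx0 (eq_zero_of_inner_basis hall)
        apply Finset.sum_lt_sum
        · intro k _
          rcases eq_or_ne k i with rfl | hki
          · exact mul_le_mul_of_nonneg_right (le_of_lt hi) (by positivity)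
          rcases eq_or_ne k j with rfl | hkj
          · exact mul_le_mul_of_nonneg_right (le_of_lt hj) (by positivity)
          · rw [hk k hki hkj]; simp
        · refine ⟨k0, Finset.mem_univ k0, ?_⟩
          have hk0m : 0 < ‖@inner ℂ _ _ (hAE.eigenvectorBasis k0) x‖ ^ 2 := by
            have := norm_pos_iff.mpr hk0
            positivity
          have hnuk0 : lam2 + opNorm E < hAE.eigenvalues k0 := by
            rcases eq_or_ne k0 i with rfl | hki
            · exact hi
            rcases eq_or_ne k0 j with rfl | hkj
            · exact hj
            · exact absurd (hk k0 hki hkj) hk0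
          exact mul_lt_mul_of_pos_right hnuk0 hk0m
      linarith
    have F1 : ∀ i j : Fin n, i ≠ j → lam2 + opNorm E < hAE.eigenvalues i →
        lam2 + opNorm E < hAE.eigenvalues j → False := by
      intro i j hij hi hj
      set p := @inner ℂ _ _ (toE u) (hAE.eigenvectorBasis i) with hp
      set q := @inner ℂ _ _ (toE u) (hAE.eigenvectorBasis j) with hq
      by_cases hpq : p = 0 ∧ q = 0
      · refine aux i j hi hj (hAE.eigenvectorBasis i) ?_ hpq.1 ?_
        · intro h0
          have hn1 : ‖hAE.eigenvectorBasis i‖ = 1 := hAE.eigenvectorBasis.orthonormal.1 i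
          rw [h0] at hn1; simp at hn1
        · intro k hki _
          rw [horthC k i, if_neg hki]
      · set x := q • hAE.eigenvectorBasis i - p • hAE.eigenvectorBasis j with hx
        have hxi : @inner ℂ _ _ (hAE.eigenvectorBasis i) x = q := by
          rw [hx, inner_sub_right, inner_smul_right, inner_smul_right,
            horthC i i, horthC i j, if_pos rfl, if_neg hij]
          ring
        have hxj : @inner ℂ _ _ (hAE.eigenvectorBasis j) x = -p := by
          rw [hx, inner_sub_right, inner_smul_right, inner_smul_right,
            horthC j i, horthC j j, if_neg (Ne.symm hij), if_pos rfl]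
          ring
        have hxu : @inner ℂ _ _ (toE u) x = 0 := by
          rw [hx, inner_sub_right, inner_smul_right, inner_smul_right, ← hp, ← hq]
          ring
        have hx0 : x ≠ 0 := by
          intro h0
          rw [h0, inner_zero_right] at hxi hxj
          apply hpq
          constructor
          · have := hxj.symm
            simpa using this
          · exact hxi.symm
        refine aux i j hi hj x hx0 hxu ?_
        intro k hki hkj
        rw [hx, inner_sub_right, inner_smul_right, inner_smul_right,
          horthC k i, horthC k j, if_neg hki, if_neg hkj]
        ring
    intro i hci
    by_contra hcon
    push_neg at hcon
    obtain ⟨j, hj⟩ : ∃ j, @inner ℂ _ _ (hAE.eigenvectorBasis j) (toE ub) ≠ 0 := by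
      by_contra hall
      push_neg at hall
      have : toE ub = 0 := eq_zero_of_inner_basis hall
      rw [this] at hnormub
      simp at hnormub
      linarith
    have hnuj : ∀ k, @inner ℂ _ _ (hAE.eigenvectorBasis k) (toE ub) ≠ 0 →
        hAE.eigenvalues k = mu := by
      intro k hkne
      have h := inner_basis_mulVec hAE (toE ub) k
      rw [fromE_toE] at h
      have h' : toE ((A+E).mulVec ub) = (mu : ℂ) • toE ub := by rw [hub]; rfl
      rw [h', inner_smul_right] at h
      have hcc : ((hAE.eigenvalues k : ℂ) - (mu:ℂ))
          * @inner ℂ _ _ (hAE.eigenvectorBasis k) (toE ub) = 0 := by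
        rw [sub_mul, h]; ring
      rcases mul_eq_zero.mp hcc with h'' | h''
      · have : (hAE.eigenvalues k : ℂ) = (mu : ℂ) := sub_eq_zero.mp h''
        exact_mod_cast this
      · exact absurd h'' hkne
    have hmugt : lam2 + opNorm E < mu := lt_of_lt_of_le hcon (hnu_le i)
    have hij : i = j := by
      by_contra hij
      exact F1 i j hij hcon (by rw [hnuj j hj]; exact hmugt)
    subst hij
    have hzero : ∀ k, k ≠ i → @inner ℂ _ _ (hAE.eigenvectorBasis k) (toE ub) = 0 := by
      intro k hki
      by_contra hkne
      exact F1 k i hki (by rw [hnuj k hkne]; exact hmugt) hcon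
    have hcontr : @inner ℂ _ _ (toE ub) w
        = (starRingEnd ℂ) (@inner ℂ _ _ (hAE.eigenvectorBasis i) (toE ub))
          * @inner ℂ _ _ (hAE.eigenvectorBasis i) w := by
      rw [inner_eq_sum_basis (B := hAE.eigenvectorBasis)]
      rw [Finset.sum_eq_single i]
      · intro k _ hki
        rw [hzero k hki]
        simp
      · intro hmem
        exact absurd (Finset.mem_univ i) hmem
    rw [hwub] at hcontr
    have := mul_ne_zero (star_ne_zero.mpr hj) hci
    exact this hcontr.symm
  set z : EuclideanSpace ℂ (Fin n) :=
    toE ((A+E).mulVec (fromE w)) - (lam1 : ℂ) • w with hz_def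
  have h_z_repr : ∀ i, @inner ℂ _ _ (hAE.eigenvectorBasis i) z
      = ((hAE.eigenvalues i : ℂ) - lam1) * @inner ℂ _ _ (hAE.eigenvectorBasis i) w := by
    intro i
    rw [hz_def, inner_sub_right, inner_smul_right, inner_basis_mulVec hAE]
    ring
  have h_z_low : (lam1 - lam2 - opNorm E)^2 * ‖w‖^2 ≤ ‖z‖^2 := by
    rw [norm_sq_eq_sum_basis (B := hAE.eigenvectorBasis) z,
        norm_sq_eq_sum_basis (B := hAE.eigenvectorBasis) w, Finset.mul_sum]
    apply Finset.sum_le_sum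
    intro i _
    rw [h_z_repr i, norm_mul]
    rcases eq_or_ne (@inner ℂ _ _ (hAE.eigenvectorBasis i) w) 0 with h0 | h0
    · rw [h0]; simp
    · have hle : hAE.eigenvalues i ≤ lam2 + opNorm E := hnuw i h0
      have habs : lam1 - lam2 - opNorm E ≤ ‖(hAE.eigenvalues i : ℂ) - lam1‖ := by
        have hcast : ((hAE.eigenvalues i : ℂ) - lam1) = ((hAE.eigenvalues i - lam1 : ℝ) : ℂ) := by
          push_cast; ring
        rw [hcast, Complex.norm_real, Real.norm_eq_abs, abs_sub_comm]
        calc lam1 - lam2 - opNorm E ≤ lam1 - hAE.eigenvalues i := by linarith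
          _ ≤ |lam1 - hAE.eigenvalues i| := le_abs_self _
      have hpow : (lam1 - lam2 - opNorm E)^2 ≤ ‖(hAE.eigenvalues i:ℂ) - lam1‖^2 :=
        pow_le_pow_left₀ (le_of_lt hδ) habs 2
      rw [mul_pow]
      exact mul_le_mul_of_nonneg_right hpow (by positivity)
  have hubz : @inner ℂ _ _ (toE ub) z = 0 := by
    rw [hz_def, inner_sub_right, inner_smul_right, hwub, mul_zero, sub_zero,
      ← inner_mulVec_swap hAE (toE ub) w, fromE_toE]
    have h' : toE ((A+E).mulVec ub) = (mu:ℂ) • toE ub := by rw [hub]; rfl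
    rw [h', inner_smul_left, hwub, mul_zero]
  have h_z_up : ‖z‖ ≤ l2norm (E.mulVec u) := by
    have hdecomp : toE (E.mulVec u) = z + ((a/n) * ((mu:ℂ) - lam1)) • toE ub := by
      have hfw : fromE w = u - (a/n : ℂ) • ub := rfl
      have hm : (A+E).mulVec (fromE w)
          = ((lam1:ℂ) • u + E.mulVec u) - (a/n : ℂ) • ((mu:ℂ) • ub) := by
        rw [hfw, Matrix.mulVec_sub, Matrix.mulVec_smul, hub, Matrix.add_mulVec, hu]
      rw [hz_def, hm, hw_def]
      ext k
      simp only [toE_apply, PiLp.add_apply, PiLp.sub_apply, PiLp.smul_apply,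
        Pi.add_apply, Pi.sub_apply, Pi.smul_apply, smul_eq_mul]
      ring
    have hcross : @inner ℂ _ _ z (((a/n) * ((mu:ℂ) - lam1)) • toE ub) = 0 := by
      rw [inner_smul_right]
      have hz2 : @inner ℂ _ _ z (toE ub) = 0 := by
        rw [← inner_conj_symm, hubz, map_zero]
      rw [hz2, mul_zero]
    have hnormsq : ‖toE (E.mulVec u)‖^2
        = ‖z‖^2 + ‖((a/n) * ((mu:ℂ) - lam1)) • toE ub‖^2 := by
      rw [hdecomp, norm_add_sq (𝕜 := ℂ), hcross]
      simp
    have h1 : ‖z‖^2 ≤ ‖toE (E.mulVec u)‖^2 := by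
      rw [hnormsq]
      exact le_add_of_nonneg_right (sq_nonneg _)
    rw [l2norm_eq]
    calc ‖z‖ = Real.sqrt (‖z‖^2) := (Real.sqrt_sq (norm_nonneg z)).symm
      _ ≤ Real.sqrt (‖toE (E.mulVec u)‖^2) := Real.sqrt_le_sqrt h1
      _ = ‖toE (E.mulVec u)‖ := Real.sqrt_sq (norm_nonneg _)
  have h_w_bound : (lam1 - lam2 - opNorm E) * ‖w‖ ≤ l2norm (E.mulVec u) := by
    have h3 : 0 ≤ l2norm (E.mulVec u) := by rw [l2norm_eq]; exact norm_nonneg _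
    have h1 : ((lam1 - lam2 - opNorm E) * ‖w‖)^2 ≤ l2norm (E.mulVec u)^2 := by
      rw [mul_pow]
      exact le_trans h_z_low (pow_le_pow_left₀ (norm_nonneg z) h_z_up 2)
    have h2 : 0 ≤ (lam1 - lam2 - opNorm E) * ‖w‖ := mul_nonneg hδ.le (norm_nonneg w)
    calc (lam1 - lam2 - opNorm E) * ‖w‖
        = Real.sqrt (((lam1 - lam2 - opNorm E) * ‖w‖)^2) := (Real.sqrt_sq h2).symm
      _ ≤ Real.sqrt (l2norm (E.mulVec u)^2) := Real.sqrt_le_sqrt h1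
      _ = l2norm (E.mulVec u) := Real.sqrt_sq h3
  have hw_sq : ‖w‖^2 = n - (‖a‖)^2 / n := by
    have hiu : @inner ℂ _ _ (toE u) (toE ub) = (starRingEnd ℂ) a := by
      rw [ha_inner, ← inner_conj_symm]
    have hcr : (@inner ℂ _ _ (toE u) ((a/n : ℂ) • toE ub)).re = ‖a‖ ^2 / n := by
      have : @inner ℂ _ _ (toE u) ((a/n : ℂ) • toE ub)
          = ((‖a‖ ^2 / n : ℝ) : ℂ) := by
        rw [inner_smul_right, hiu, div_mul_eq_mul_div, Complex.mul_conj,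
          Complex.normSq_eq_norm_sq]
        push_cast
        ring
      rw [this, Complex.ofReal_re]
    have hsm : ‖(a/n : ℂ) • toE ub‖^2 = ‖a‖ ^2 / n := by
      rw [norm_smul, mul_pow, norm_div, Complex.norm_natCast,
        hnormub, Real.sq_sqrt (Nat.cast_nonneg n), div_pow]
      field_simp
    rw [hw_def, norm_sub_sq (𝕜 := ℂ), hnormu2, hsm]
    have : RCLike.re (@inner ℂ _ _ (toE u) ((a/n : ℂ) • toE ub))
        = (@inner ℂ _ _ (toE u) ((a/n : ℂ) • toE ub)).re := rfl
    rw [this, hcr]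
    ring
  have hd2 : d2 ub u ≤ Real.sqrt (2*n - 2*‖a‖) := by
    have hbdd : BddBelow (Set.range fun θ : ℝ =>
        l2norm (fun k => Complex.exp (θ * Complex.I) * ub k - u k)) := by
      refine ⟨0, ?_⟩
      rintro x ⟨θ, rfl⟩
      exact Real.sqrt_nonneg _
    have hle := ciInf_le hbdd (Complex.arg a)
    refine le_trans hle ?_
    set c : ℂ := Complex.exp ((Complex.arg a : ℂ) * Complex.I) with hc
    have hval : l2norm (fun k => Complex.exp (((Complex.arg a : ℝ) : ℂ) * Complex.I) * ub k - u k)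
        = ‖c • toE ub - toE u‖ := by
      rw [l2norm_eq]; rfl
    rw [hval]
    have hnormc : ‖c‖ = 1 := by
      rw [hc, Complex.norm_exp_ofReal_mul_I]
    have hconj : (starRingEnd ℂ) c * a = ((‖a‖ : ℝ) : ℂ) := by
      conv_lhs => rw [← Complex.norm_mul_exp_arg_mul_I a]
      rw [hc, ← Complex.exp_conj]
      have hcj : (starRingEnd ℂ) ((Complex.arg a : ℂ) * Complex.I) = -((Complex.arg a : ℂ) * Complex.I) := by
        simp [Complex.conj_ofReal]
      rw [hcj]
      rw [show Complex.exp (-((Complex.arg a : ℂ) * Complex.I)) * ((‖a‖ : ℂ) * Complex.exp ((Complex.arg a : ℂ) * Complex.I)) = (‖a‖ : ℂ) * (Complex.exp (-((Complex.arg a : ℂ) * Complex.I)) * Complex.exp ((Complex.arg a : ℂ) * Complex.I)) from by ring]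
      rw [← Complex.exp_add]
      simp
    have hinner : (@inner ℂ _ _ (c • toE ub) (toE u)).re = ‖a‖ := by
      rw [inner_smul_left, ← ha_inner, hconj, Complex.ofReal_re]
    have hsq2 : ‖c • toE ub - toE u‖^2 = 2*n - 2*‖a‖ := by
      rw [norm_sub_sq (𝕜 := ℂ), norm_smul, hnormc, one_mul, hnormub2, hnormu2]
      have : RCLike.re (@inner ℂ _ _ (c • toE ub) (toE u))
          = (@inner ℂ _ _ (c • toE ub) (toE u)).re := rfl
      rw [this, hinner]
      ring
    calc ‖c • toE ub - toE u‖
        = Real.sqrt (‖c • toE ub - toE u‖^2) := (Real.sqrt_sq (norm_nonneg _)).symm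
      _ = Real.sqrt (2*n - 2*‖a‖) := by rw [hsq2]
      _ ≤ Real.sqrt (2*n - 2*‖a‖) := le_rfl
  have h2na : 2*(n:ℝ) - 2*‖a‖ ≤ 2 * ‖w‖^2 := by
    rw [hw_sq]
    have h0 : 0 ≤ ‖a‖ := (norm_nonneg a)
    have : ‖a‖ ^ 2 / n ≤ ‖a‖ := by
      rw [div_le_iff₀ hn']
      nlinarith
    linarith
  calc d2 ub u ≤ Real.sqrt (2*n - 2*‖a‖) := hd2
    _ ≤ Real.sqrt (2 * ‖w‖^2) := Real.sqrt_le_sqrt h2na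
    _ = Real.sqrt 2 * ‖w‖ := by
        rw [Real.sqrt_mul (by norm_num), Real.sqrt_sq (norm_nonneg w)]
    _ ≤ Real.sqrt 2 * (l2norm (E.mulVec u) / (lam1 - lam2 - opNorm E)) := by
        apply mul_le_mul_of_nonneg_left _ (Real.sqrt_nonneg 2)
        rw [le_div_iff₀ hδ, mul_comm]
        exact h_w_bound
    _ = Real.sqrt 2 * l2norm (E.mulVec u) / (lam1 - lam2 - opNorm E) := by ring

end PhaseSync
end
end

section
/- Let C ∈ ℂ^{n×n} be Hermitian and x ∈ ℂⁿ with all entries of unit modulus. Suppose S := Re(ddiag(C x x*)) - C is positive semidefinite with rank n - 1. Then X = xx* is the unique solution of the SDP max trace(CX) over Hermitian PSD X with unit diagonal, and x is the unique maximizer (up to global phase) of x*Cx over unit-modulus vectors. -/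
noncomputable section

namespace PhaseSync

open Complex

variable {n : ℕ}

open scoped ComplexOrder

open Matrix in

theorem trace_psd_mul {n : ℕ} {S Y : Matrix (Fin n) (Fin n) ℂ} (hS : S.PosSemidef)
    (hY : Y.PosSemidef) :
    0 ≤ ((S * Y).trace).re ∧ (((S * Y).trace).re = 0 → S * Y = 0) := by
  obtain ⟨A, rfl⟩ : ∃ A : Matrix (Fin n) (Fin n) ℂ, S = Aᴴ * A := by
    open scoped MatrixOrder Matrix.Norms.L2Operator in
    exact CStarAlgebra.nonneg_iff_eq_star_mul_self.mp hS.nonneg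
  obtain ⟨B, rfl⟩ : ∃ B : Matrix (Fin n) (Fin n) ℂ, Y = Bᴴ * B := by
    open scoped MatrixOrder Matrix.Norms.L2Operator in
    exact CStarAlgebra.nonneg_iff_eq_star_mul_self.mp hY.nonneg
  have key : ((Aᴴ * A) * (Bᴴ * B)).trace = ((A * Bᴴ)ᴴ * (A * Bᴴ)).trace := by
    have h1 : (A * Bᴴ)ᴴ * (A * Bᴴ) = B * ((Aᴴ * A) * Bᴴ) := by
      simp only [Matrix.conjTranspose_mul, Matrix.conjTranspose_conjTranspose, Matrix.mul_assoc]
    rw [h1, Matrix.trace_mul_comm B]; simp only [Matrix.mul_assoc]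
  set M := A * Bᴴ with hM
  have htr : ((Aᴴ * A) * (Bᴴ * B)).trace = ((∑ j, ∑ i, Complex.normSq (M i j) : ℝ) : ℂ) := by
    rw [key, Matrix.trace]
    push_cast
    congr 1
    ext j
    simp [Matrix.mul_apply, Matrix.conjTranspose_apply, Complex.normSq_eq_conj_mul_self]
  have hnn0 : (0:ℝ) ≤ ∑ j, ∑ i, Complex.normSq (M i j) :=
    Finset.sum_nonneg fun j _ => Finset.sum_nonneg fun i _ => Complex.normSq_nonneg _
  constructor
  · rw [htr]; simpa using hnn0
  · intro h0
    rw [htr] at h0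
    simp only [Complex.ofReal_re] at h0
    have hM0 : M = 0 := by
      ext i j
      have h1 := (Finset.sum_eq_zero_iff_of_nonneg (fun j' _ =>
        Finset.sum_nonneg fun i' _ => Complex.normSq_nonneg (M i' j'))).mp h0 j (Finset.mem_univ j)
      have h2 := (Finset.sum_eq_zero_iff_of_nonneg (fun i' _ =>
        Complex.normSq_nonneg (M i' j))).mp h1 i (Finset.mem_univ i)
      simpa [Complex.normSq_eq_zero] using h2
    calc (Aᴴ * A) * (Bᴴ * B) = Aᴴ * (A * Bᴴ) * B := by simp only [Matrix.mul_assoc]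
      _ = 0 := by rw [← hM, hM0]; simp


/-- if `S = Re(ddiag(C x x*)) - C` is PSD of rank `n-1`, then `x x*` is the
unique SDP solution and `x` is the unique (up to global phase) maximizer of `v*Cv`
over unit-modulus vectors. -/
theorem stmt9 (n : ℕ) (C : Matrix (Fin n) (Fin n) ℂ) (hC : C.IsHermitian)
    (x : Fin n → ℂ) (hx : ∀ k, ‖x k‖ = 1)
    (hS : (Matrix.diagonal (fun k => ((((C * outer x) k k).re : ℝ) : ℂ)) - C).PosSemidef)
    (hrank : (Matrix.diagonal (fun k => ((((C * outer x) k k).re : ℝ) : ℂ)) - C).rank = n - 1) :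
    (∀ Y : Matrix (Fin n) (Fin n) ℂ, Y.PosSemidef → (∀ k, Y k k = 1) →
      ((C * Y).trace).re ≤ ((C * outer x).trace).re ∧
      (((C * Y).trace).re = ((C * outer x).trace).re → Y = outer x)) ∧
    (∀ v : Fin n → ℂ, (∀ k, ‖v k‖ = 1) →
      (dotProduct (star v) (C.mulVec v)).re ≤
        (dotProduct (star x) (C.mulVec x)).re ∧
      ((dotProduct (star v) (C.mulVec v)).re =
          (dotProduct (star x) (C.mulVec x)).re →
        ∃ θ : ℝ, v = fun k => Complex.exp (θ * Complex.I) * x k)) := by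
  classical
  set d : Fin n → ℂ := fun k => ((((C * outer x) k k).re : ℝ) : ℂ) with hd
  set S : Matrix (Fin n) (Fin n) ℂ := Matrix.diagonal d - C with hSdef
  have hxconj : ∀ k, x k * (starRingEnd ℂ) (x k) = 1 := by
    intro k
    rw [Complex.mul_conj]
    norm_cast
    rw [Complex.normSq_eq_norm_sq, hx k, one_pow]
  -- diag entries of C * outer x in terms of mulVec
  have hdiagCx : ∀ k, (C * outer x) k k = (C.mulVec x) k * (starRingEnd ℂ) (x k) := by
    intro k
    simp only [Matrix.mul_apply, outer, Matrix.of_apply, Matrix.mulVec, dotProduct,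
      Finset.sum_mul]
    exact Finset.sum_congr rfl fun j _ => by ring
  -- x* S x = 0
  have hquad : dotProduct (star x) (S.mulVec x) = 0 := by
    have hnn := hS.dotProduct_mulVec_nonneg x
    have hre : (dotProduct (star x) (S.mulVec x)).re = 0 := by
      have h1 : dotProduct (star x) (S.mulVec x) =
          (∑ k, d k) - dotProduct (star x) (C.mulVec x) := by
        rw [hSdef, Matrix.sub_mulVec, dotProduct_sub]
        congr 1
        simp only [Matrix.mulVec_diagonal, dotProduct, Pi.star_apply, RCLike.star_def]
        exact Finset.sum_congr rfl fun k _ => by rw [mul_comm, mul_assoc, hxconj k, mul_one]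
      have h2 : dotProduct (star x) (C.mulVec x) = ∑ k, (C * outer x) k k := by
        simp only [dotProduct, Pi.star_apply, RCLike.star_def]
        exact Finset.sum_congr rfl fun k _ => by rw [hdiagCx k]; ring
      rw [h1, h2, Complex.sub_re]
      simp [hd, Complex.re_sum]
    rw [Complex.le_def] at hnn
    apply Complex.ext
    · simpa using hre
    · simpa using hnn.2.symm
  have hSx : S.mulVec x = 0 := (hS.dotProduct_mulVec_zero_iff x).mp hquad
  -- S * outer x = 0
  have hSouter : S * outer x = 0 := by
    ext i j
    simp only [Matrix.mul_apply, outer, Matrix.of_apply, Matrix.zero_apply]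
    have : ∑ k, S i k * (x k * (starRingEnd ℂ) (x j)) =
        (∑ k, S i k * x k) * (starRingEnd ℂ) (x j) := by
      rw [Finset.sum_mul]; exact Finset.sum_congr rfl fun k _ => by ring
    rw [this]
    have : (∑ k, S i k * x k) = S.mulVec x i := rfl
    rw [this, hSx]
    simp
  -- kernel of S is spanned by x
  have hker : ∀ y : Fin n → ℂ, S.mulVec y = 0 → ∃ c : ℂ, y = c • x := by
    rcases Nat.eq_zero_or_pos n with hn | hn
    · subst hn
      intro y _
      exact ⟨0, funext fun k => k.elim0⟩
    · have hx0 : x ≠ 0 := by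
        intro h
        have := hx ⟨0, hn⟩
        rw [h] at this
        simp at this
      have hrank' : Module.finrank ℂ (LinearMap.range S.mulVecLin) = n - 1 := hrank
      have hrn := LinearMap.finrank_range_add_finrank_ker S.mulVecLin
      rw [hrank', Module.finrank_pi] at hrn
      simp only [Fintype.card_fin] at hrn
      have hkerdim : Module.finrank ℂ (LinearMap.ker S.mulVecLin) = 1 := by omega
      have hle : (Submodule.span ℂ {x}) ≤ LinearMap.ker S.mulVecLin := by
        rw [Submodule.span_singleton_le_iff_mem, LinearMap.mem_ker, Matrix.mulVecLin_apply]
        exact hSx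
      have heq : (Submodule.span ℂ {x}) = LinearMap.ker S.mulVecLin := by
        apply Submodule.eq_of_le_of_finrank_le hle
        rw [hkerdim, finrank_span_singleton hx0]
      intro y hy
      have : y ∈ Submodule.span ℂ ({x} : Set (Fin n → ℂ)) := by
        rw [heq, LinearMap.mem_ker, Matrix.mulVecLin_apply]
        exact hy
      obtain ⟨c, hc⟩ := Submodule.mem_span_singleton.mp this
      exact ⟨c, hc.symm⟩
  -- outer x has unit diagonal
  have houterdiag : ∀ k, outer x k k = 1 := fun k => hxconj k
  -- trace (C * outer x) = ∑ d
  have htraceD : ∀ Y : Matrix (Fin n) (Fin n) ℂ, (∀ k, Y k k = 1) →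
      (Matrix.diagonal d * Y).trace = ∑ k, d k := by
    intro Y hY
    rw [Matrix.trace]
    exact Finset.sum_congr rfl fun k _ => by
      rw [Matrix.diag_apply, Matrix.diagonal_mul, hY k, mul_one]
  have hCdecomp : C = Matrix.diagonal d - S := by rw [hSdef]; exact (sub_sub_cancel _ _).symm
  have htraceC : ∀ Y : Matrix (Fin n) (Fin n) ℂ, (∀ k, Y k k = 1) →
      (C * Y).trace = (∑ k, d k) - (S * Y).trace := by
    intro Y hY
    conv_lhs => rw [hCdecomp]
    rw [Matrix.sub_mul, Matrix.trace_sub, htraceD Y hY]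
  have htraceCx : (C * outer x).trace = ∑ k, d k := by
    rw [htraceC (outer x) houterdiag, hSouter, Matrix.trace_zero, sub_zero]
  -- Part 1
  have part1 : ∀ Y : Matrix (Fin n) (Fin n) ℂ, Y.PosSemidef → (∀ k, Y k k = 1) →
      ((C * Y).trace).re ≤ ((C * outer x).trace).re ∧
      (((C * Y).trace).re = ((C * outer x).trace).re → Y = outer x) := by
    intro Y hYpsd hY1
    obtain ⟨htnn, htz⟩ := trace_psd_mul hS hYpsd
    have heq1 : ((C * Y).trace).re = ((C * outer x).trace).re - ((S * Y).trace).re := by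
      rw [htraceC Y hY1, htraceCx, Complex.sub_re]
    constructor
    · rw [heq1]; linarith
    · intro heq2
      have hz : ((S * Y).trace).re = 0 := by rw [heq1] at heq2; linarith
      have hSY : S * Y = 0 := htz hz
      -- columns of Y are multiples of x
      have hcol : ∀ j, ∃ c : ℂ, (fun i => Y i j) = c • x := by
        intro j
        apply hker
        funext i
        have : (S * Y) i j = 0 := by rw [hSY]; rfl
        simpa [Matrix.mul_apply, Matrix.mulVec, dotProduct] using this
      ext i j
      obtain ⟨c, hc⟩ := hcol j
      have hYij : Y i j = c * x i := by
        have := congrFun hc i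
        simpa using this
      have hYjj : Y j j = c * x j := by
        have := congrFun hc j
        simpa using this
      have hcval : c = (starRingEnd ℂ) (x j) := by
        have h1 : c * x j = 1 := by rw [← hYjj]; exact hY1 j
        calc c = c * (x j * (starRingEnd ℂ) (x j)) := by rw [hxconj j, mul_one]
          _ = (c * x j) * (starRingEnd ℂ) (x j) := by ring
          _ = (starRingEnd ℂ) (x j) := by rw [h1, one_mul]
      rw [hYij, hcval]
      simp only [outer, Matrix.of_apply]
      ring
  refine ⟨part1, ?_⟩
  -- Part 2
  intro v hv
  have hvconj : ∀ k, v k * (starRingEnd ℂ) (v k) = 1 := by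
    intro k
    rw [Complex.mul_conj]
    norm_cast
    rw [Complex.normSq_eq_norm_sq, hv k, one_pow]
  have houterv : (outer v).PosSemidef := by
    refine Matrix.PosSemidef.of_dotProduct_mulVec_nonneg ?_ ?_
    · ext i j
      simp only [Matrix.conjTranspose_apply, outer, Matrix.of_apply, star_mul', star_star,
        RCLike.star_def, Complex.conj_conj]
      ring
    · intro u
      have hmv : (outer v).mulVec u = (∑ j, (starRingEnd ℂ) (v j) * u j) • v := by
        funext i
        simp only [outer, Matrix.mulVec, dotProduct, Matrix.of_apply, Pi.smul_apply,
          smul_eq_mul, Finset.sum_mul, Finset.mul_sum]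
        exact Finset.sum_congr rfl fun j _ => by ring
      set t : ℂ := ∑ j, (starRingEnd ℂ) (v j) * u j with ht
      have h2 : dotProduct (star u) v = (starRingEnd ℂ) t := by
        rw [ht, map_sum]
        simp only [dotProduct, Pi.star_apply, RCLike.star_def]
        refine Finset.sum_congr rfl fun j _ => ?_
        simp only [map_mul, Complex.conj_conj]
        ring
      have h3 : dotProduct (star u) ((outer v).mulVec u) = (starRingEnd ℂ) t * t := by
        rw [hmv, dotProduct_smul, smul_eq_mul, h2, mul_comm]
      rw [h3, ← Complex.normSq_eq_conj_mul_self]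
      norm_cast
      exact Complex.normSq_nonneg t
  have hvdiag : ∀ k, outer v k k = 1 := fun k => hvconj k
  -- trace (C * outer w) = w* C w
  have hquadtr : ∀ w : Fin n → ℂ, dotProduct (star w) (C.mulVec w) = (C * outer w).trace := by
    intro w
    rw [Matrix.trace]
    simp only [dotProduct, Pi.star_apply, RCLike.star_def, Matrix.diag_apply,
      Matrix.mul_apply, outer, Matrix.of_apply, Matrix.mulVec]
    refine Finset.sum_congr rfl fun k _ => ?_
    simp only [dotProduct, Finset.mul_sum, Finset.sum_mul]
    exact Finset.sum_congr rfl fun j _ => by ring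
  obtain ⟨hle, heqc⟩ := part1 (outer v) houterv hvdiag
  rw [hquadtr v, hquadtr x]
  refine ⟨hle, fun heq => ?_⟩
  have hvv : outer v = outer x := heqc heq
  rcases Nat.eq_zero_or_pos n with hn | hn
  · subst hn
    exact ⟨0, funext fun k => k.elim0⟩
  · set i0 : Fin n := ⟨0, hn⟩
    set lam : ℂ := (starRingEnd ℂ) (x i0) * v i0 with hlam
    have hlamabs : ‖lam‖ = 1 := by
      rw [hlam, norm_mul, RCLike.norm_conj, hx i0, hv i0, one_mul]
    obtain ⟨θ, hθ⟩ := (Complex.norm_eq_one_iff lam).mp hlamabs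
    refine ⟨θ, funext fun k => ?_⟩
    have hvk : v k * (starRingEnd ℂ) (v i0) = x k * (starRingEnd ℂ) (x i0) := by
      have h := congrFun (congrFun hvv k) i0
      simpa [outer] using h
    have : v k = lam * x k := by
      calc v k = v k * ((starRingEnd ℂ) (v i0) * v i0) := by
            rw [mul_comm ((starRingEnd ℂ) (v i0)), hvconj i0, mul_one]
        _ = (v k * (starRingEnd ℂ) (v i0)) * v i0 := by ring
        _ = (x k * (starRingEnd ℂ) (x i0)) * v i0 := by rw [hvk]
        _ = lam * x k := by rw [hlam]; ring
    rw [this, hθ]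


end PhaseSync
end
end

section
/- Let x, y ∈ ℂⁿ with ‖x‖₂ = ‖y‖₂ = √n, z ∈ ℂⁿ with unit-modulus entries, ε ∈ (0, 1/2), d₂(x, z) ≤ ε√n, d₂(y, z) ≤ ε√n. Write x = az + √n·α and y = bz + √n·β with a, b ≥ 0 real, α*z = β*z = 0. Let θ achieve d₂(x, y) = ‖e^{iθ}x - y‖₂. Then |e^{iθ}a - b| ≤ 6ε ‖e^{iθ}α - β‖₂. -/
noncomputable section

namespace PhaseSync

open Complex

variable {n : ℕ}

lemma l2norm_nonneg (v : Fin n → ℂ) : 0 ≤ l2norm v := Real.sqrt_nonneg _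

lemma l2norm_sq (v : Fin n → ℂ) : (l2norm v)^2 = ∑ k, ‖v k‖ ^ 2 :=
  Real.sq_sqrt (by positivity)

lemma herm_cs (u w : Fin n → ℂ) : ‖herm u w‖ ≤ l2norm u * l2norm w := by
  have := norm_inner_le_norm (𝕜 := ℂ) (E := EuclideanSpace ℂ (Fin n)) (WithLp.toLp 2 u) (WithLp.toLp 2 w)
  simpa [herm, l2norm, EuclideanSpace.norm_eq, PiLp.inner_apply, RCLike.inner_apply, mul_comm] using this

lemma expand_sub (u w : Fin n → ℂ) :
    ∑ k, ‖u k - w k‖^2 =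
      (∑ k, ‖u k‖^2) + (∑ k, ‖w k‖^2) - 2 * (herm w u).re := by
  have h : ∀ k, ‖u k - w k‖^2 =
      ‖u k‖^2 + ‖w k‖^2 - 2 * ((starRingEnd ℂ) (w k) * u k).re := by
    intro k
    rw [Complex.sq_norm, Complex.sq_norm, Complex.sq_norm, Complex.normSq_sub, mul_comm (u k)]
  simp only [h, herm, Complex.re_sum, Finset.sum_sub_distrib, Finset.sum_add_distrib,
    Finset.mul_sum]

lemma herm_conj (u w : Fin n → ℂ) : (starRingEnd ℂ) (herm u w) = herm w u := by
  simp [herm, map_sum, mul_comm]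

lemma herm_comb (u v w : Fin n → ℂ) (c d : ℂ) :
    herm u (fun k => c * v k + d * w k) = c * herm u v + d * herm u w := by
  simp [herm, mul_add, Finset.sum_add_distrib, Finset.mul_sum, mul_left_comm]

lemma herm_comb_left (v w u : Fin n → ℂ) (c d : ℝ) :
    herm (fun k => (c:ℂ) * v k + (d:ℂ) * w k) u = c * herm v u + d * herm w u := by
  simp only [herm, map_add, map_mul, Complex.conj_ofReal, add_mul, Finset.sum_add_distrib,
    Finset.mul_sum, mul_assoc]

lemma herm_smul (u v : Fin n → ℂ) (c : ℂ) : herm u (fun k => c * v k) = c * herm u v := by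
  simp [herm, Finset.mul_sum, mul_left_comm]

lemma herm_sub (u v w : Fin n → ℂ) :
    herm u (fun k => v k - w k) = herm u v - herm u w := by
  simp [herm, mul_sub, Finset.sum_sub_distrib]

lemma herm_self (v : Fin n → ℂ) : herm v v = ((∑ k, ‖v k‖^2 : ℝ) : ℂ) := by
  rw [herm]
  push_cast
  refine Finset.sum_congr rfl fun k _ => ?_
  rw [mul_comm, Complex.mul_conj, Complex.normSq_eq_norm_sq]
  push_cast
  ring

lemma herm_one (z : Fin n → ℂ) (hz : ∀ k, ‖z k‖ = 1) : herm z z = (n : ℂ) := by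
  have h : ∀ k, (starRingEnd ℂ) (z k) * z k = 1 := by
    intro k
    rw [mul_comm, Complex.mul_conj, Complex.normSq_eq_norm_sq, hz k]
    norm_num
  simp [herm, h]

lemma d2_le (x y : Fin n → ℂ) (φ : ℝ) :
    d2 x y ≤ l2norm (fun k => Complex.exp (φ * Complex.I) * x k - y k) := by
  apply ciInf_le
  exact ⟨0, by rintro r ⟨ψ, rfl⟩; exact l2norm_nonneg _⟩

lemma le_d2 (x y : Fin n → ℂ) (L : ℝ)
    (h : ∀ φ : ℝ, L ≤ l2norm (fun k => Complex.exp (φ * Complex.I) * x k - y k)) :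
    L ≤ d2 x y := le_ciInf h

lemma exp_neg_arg (c : ℂ) :
    Complex.exp (((-Complex.arg c : ℝ)) * Complex.I) * c = (‖c‖ : ℂ) := by
  conv_lhs => rw [← Complex.norm_mul_exp_arg_mul_I c]
  push_cast
  rw [mul_comm, mul_assoc, ← Complex.exp_add]
  norm_num



lemma final_ineq (a b ε A B D r s qre qim : ℝ)
    (hε0 : 0 < ε) (hε : ε < 1/2)
    (ha : 0 ≤ a) (hb : 0 ≤ b)
    (h1 : a^2 + A^2 = 1) (h2 : b^2 + B^2 = 1)
    (hA0 : 0 ≤ A) (hB0 : 0 ≤ B) (hD0 : 0 ≤ D)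
    (haε : 1 - ε^2/2 ≤ a) (hbε : 1 - ε^2/2 ≤ b)
    (hrs : r^2 + s^2 = 1)
    (him : a*b*s + qim = 0)
    (hre : 0 ≤ a*b*r + qre)
    (hqre : |qre| ≤ A*B) (hqim : |qim| ≤ A*B)
    (hqimBD : |qim| ≤ B*D)
    (hD2 : D^2 = A^2 + B^2 - 2*qre) :
    a^2 + b^2 - 2*a*b*r ≤ (6*ε*D)^2 := by
  have hqre' := abs_le.mp hqre
  have hqim' := abs_le.mp hqim
  have hqimBD' := abs_le.mp hqimBD
  have hε2 : ε^2 ≤ 1/4 := by nlinarith only [hε0, hε]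
  have ha78 : 7/8 ≤ a := by linarith
  have hb78 : 7/8 ≤ b := by linarith
  have ha1 : a ≤ 1 := by nlinarith only [h1, ha, sq_nonneg A]
  have hb1 : b ≤ 1 := by nlinarith only [h2, hb, sq_nonneg B]
  have hA2 : A^2 ≤ ε^2 := by
    nlinarith only [h1, haε, ha1, ha, hε0, (by linarith : (0:ℝ) ≤ a + 1)]
  have hB2 : B^2 ≤ ε^2 := by
    nlinarith only [h2, hbε, hb1, hb, hε0, (by linarith : (0:ℝ) ≤ b + 1)]
  have hAε : A ≤ ε := by
    nlinarith only [hA2, hA0, hε0, (by linarith : (0:ℝ) < A + ε)]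
  have hBε : B ≤ ε := by
    nlinarith only [hB2, hB0, hε0, (by linarith : (0:ℝ) < B + ε)]
  have hab : 49/64 ≤ a*b := by
    nlinarith only [ha78, hb78, mul_nonneg (by linarith : (0:ℝ) ≤ a - 7/8)
      (by linarith : (0:ℝ) ≤ b - 7/8)]
  have hab1 : a*b ≤ 1 := by
    nlinarith only [ha, hb, ha1, hb1, mul_nonneg (by linarith : (0:ℝ) ≤ 1 - a)
      (by linarith : (0:ℝ) ≤ 1 - b)]
  have hABle : A*B ≤ 1/4 := by
    have h' : A*B ≤ ε*ε := mul_le_mul hAε hBε hB0 hε0.le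
    nlinarith only [h', hε0, hε]
  -- the squared phase relation
  have hsq_eq : (a*b*s)^2 = qim^2 := by linear_combination (a*b*s - qim) * him
  have hq14 : qim^2 ≤ (1/4)^2 := by
    have h' : |qim| ≤ 1/4 := le_trans hqim hABle
    have h'' : |qim|^2 ≤ (1/4)^2 := pow_le_pow_left₀ (abs_nonneg _) h' 2
    rwa [_root_.sq_abs] at h''
  have hs2' : s^2 ≤ (16/49)^2 := by
    have h49 : (49/64)^2 ≤ (a*b)^2 := by nlinarith only [hab]
    have h50 : (49/64)^2 * s^2 ≤ (a*b)^2 * s^2 :=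
      mul_le_mul_of_nonneg_right h49 (sq_nonneg s)
    have h51 : (a*b)^2 * s^2 = (a*b*s)^2 := by ring
    rw [h51] at h50
    linarith [hsq_eq, hq14, h50]
  have hre_lb : -(16/49) ≤ r := by
    by_contra hcon
    push_neg at hcon
    have hh : 0 ≤ (a*b - 49/64) * (-(16/49) - r) :=
      mul_nonneg (by linarith) (by linarith)
    nlinarith only [hh, hre, hqre', hABle, hab, hcon]
  have hr_pos : 0 < r := by
    by_contra hcon
    push_neg at hcon
    have hh : 0 ≤ (-r) * (r + 16/49) := mul_nonneg (by linarith) (by linarith)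
    nlinarith only [hh, hrs, hs2', hcon, hre_lb]
  have hr1 : r ≤ 1 := by nlinarith only [hrs, sq_nonneg s, hr_pos]
  have h1r : 1 - r ≤ s^2 := by
    have hh : 0 ≤ r * (1 - r) := mul_nonneg hr_pos.le (by linarith)
    nlinarith only [hrs, hh]
  have hBA : (B-A)^2 ≤ D^2 := by nlinarith only [hD2, hqre'.2]
  have hBA2 : (A+B)^2 ≤ 4*ε^2 := by
    have h' : A + B ≤ 2*ε := by linarith
    nlinarith only [h', hA0, hB0, hε0]
  have e0 : a^2 - b^2 = B^2 - A^2 := by linarith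
  have habD : (a-b)^2*(a+b)^2 ≤ 4*ε^2*D^2 := by
    have e1 : (a-b)^2*(a+b)^2 = (B-A)^2*(B+A)^2 := by
      linear_combination (a^2 - b^2 + (B^2 - A^2)) * e0
    rw [e1]
    calc (B-A)^2*(B+A)^2 ≤ D^2 * (4*ε^2) :=
          mul_le_mul hBA (by linarith [hBA2] : (B+A)^2 ≤ 4*ε^2) (sq_nonneg _) (sq_nonneg _)
      _ = 4*ε^2*D^2 := by ring
  have habsq : (a-b)^2 ≤ (64/49)*ε^2*D^2 := by
    have hab49 : 49/16 ≤ (a+b)^2 := by nlinarith only [ha78, hb78]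
    have step1 : (a-b)^2 * (49/16) ≤ (a-b)^2 * (a+b)^2 :=
      mul_le_mul_of_nonneg_left hab49 (sq_nonneg (a-b))
    linarith only [step1, habD]
  have h2ab : 2*(a*b)*(1 - r) ≤ (128/49)*ε^2*D^2 := by
    have hqBD2 : qim^2 ≤ (B*D)^2 := by
      have h'' : |qim|^2 ≤ (B*D)^2 := pow_le_pow_left₀ (abs_nonneg _) hqimBD 2
      rwa [_root_.sq_abs] at h''
    have hBD2 : (B*D)^2 ≤ (ε*D)^2 := by
      have h' : B*D ≤ ε*D := mul_le_mul_of_nonneg_right hBε hD0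
      exact pow_le_pow_left₀ (mul_nonneg hB0 hD0) h' 2
    have habs2 : (a*b*s)^2 ≤ (ε*D)^2 := by linarith [hsq_eq, hqBD2, hBD2]
    have step : (49/64)*(a*b*s^2) ≤ (a*b)*(a*b*s^2) :=
      mul_le_mul_of_nonneg_right hab (mul_nonneg (mul_nonneg ha hb) (sq_nonneg s))
    have step2 : (a*b)*(a*b*s^2) = (a*b*s)^2 := by ring
    rw [step2] at step
    have h4 : a*b*s^2 ≤ (64/49)*(ε*D)^2 := by linarith only [step, habs2]
    have h5 : a*b*(1-r) ≤ a*b*(s^2) :=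
      mul_le_mul_of_nonneg_left h1r (mul_nonneg ha hb)
    nlinarith only [h4, h5]
  have expand : a^2 + b^2 - 2*a*b*r = (a-b)^2 + 2*(a*b)*(1-r) := by ring
  rw [expand]
  nlinarith only [habsq, h2ab, mul_nonneg (mul_nonneg hε0.le hε0.le) (sq_nonneg D)]


set_option maxHeartbeats 1000000 in
/-- key orthogonal-decomposition inequality. With `x = a z + √n α`,
`y = b z + √n β`, `α, β ⊥ z`, and `θ` attaining `d₂(x,y)`,
one has `|e^{iθ} a - b| ≤ 6ε ‖e^{iθ}α - β‖₂`. -/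
theorem stmt11 (n : ℕ) (hn : 0 < n) (z x y α β : Fin n → ℂ) (a b ε θ : ℝ)
    (hz : ∀ k, ‖z k‖ = 1)
    (hε0 : 0 < ε) (hε : ε < 1 / 2)
    (hxn : l2norm x = Real.sqrt n) (hyn : l2norm y = Real.sqrt n)
    (hxz : d2 x z ≤ ε * Real.sqrt n) (hyz : d2 y z ≤ ε * Real.sqrt n)
    (ha : 0 ≤ a) (hb : 0 ≤ b)
    (hxdec : x = (a : ℂ) • z + (Real.sqrt n : ℝ) • α)
    (hydec : y = (b : ℂ) • z + (Real.sqrt n : ℝ) • β)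
    (hαz : herm α z = 0) (hβz : herm β z = 0)
    (hθ : l2norm (fun k => Complex.exp (θ * Complex.I) * x k - y k) = d2 x y) :
    ‖Complex.exp (θ * Complex.I) * (a : ℂ) - (b : ℂ)‖ ≤
      6 * ε * l2norm (fun k => Complex.exp (θ * Complex.I) * α k - β k) := by
  have hnpos : (0:ℝ) < n := Nat.cast_pos.mpr hn
  have hsn : (0:ℝ) < Real.sqrt n := Real.sqrt_pos.mpr hnpos
  have hsn2 : (Real.sqrt n)^2 = (n:ℝ) := Real.sq_sqrt hnpos.le
  have hC : ((Real.sqrt n : ℝ):ℂ)^2 = ((n:ℝ):ℂ) := by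
    rw [← Complex.ofReal_pow, hsn2]
  set e := Complex.exp ((θ:ℂ) * Complex.I) with hedef
  have heabs : ‖e‖ = 1 := Complex.norm_exp_ofReal_mul_I θ
  have hrs : e.re^2 + e.im^2 = 1 := by
    have h := Complex.sq_norm e
    rw [heabs, Complex.normSq_apply] at h
    linear_combination -h
  set A := l2norm α with hAdef
  set B := l2norm β with hBdef
  set D := l2norm (fun k => e * α k - β k) with hDdef
  have hA0 : 0 ≤ A := l2norm_nonneg _
  have hB0 : 0 ≤ B := l2norm_nonneg _
  have hD0 : 0 ≤ D := l2norm_nonneg _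
  clear_value e A B D
  have hxe : x = fun k => ((a:ℝ):ℂ) * z k + ((Real.sqrt n : ℝ):ℂ) * α k := by
    funext k; rw [hxdec]; simp [Complex.real_smul]
  have hye : y = fun k => ((b:ℝ):ℂ) * z k + ((Real.sqrt n : ℝ):ℂ) * β k := by
    funext k; rw [hydec]; simp [Complex.real_smul]
  have hzz : herm z z = ((n:ℝ):ℂ) := by rw [herm_one z hz]; norm_num
  have hss : ∀ w : ℂ, ((Real.sqrt (n:ℝ) : ℝ):ℂ) * (((Real.sqrt (n:ℝ) : ℝ):ℂ) * w) =
      ((n:ℝ):ℂ) * w := by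
    intro w
    rw [← mul_assoc, ← pow_two, hC]
  have hzα : herm z α = 0 := by rw [← herm_conj, hαz, map_zero]
  have hzβ : herm z β = 0 := by rw [← herm_conj, hβz, map_zero]
  have hzx : herm z x = ((a * n : ℝ):ℂ) := by
    rw [hxe, herm_comb, hzz, hzα]; push_cast; ring
  have hzy : herm z y = ((b * n : ℝ):ℂ) := by
    rw [hye, herm_comb, hzz, hzβ]; push_cast; ring
  have hsum_z : ∑ k, ‖z k‖^2 = (n:ℝ) := by simp [hz]
  have hsum_x : ∑ k, ‖x k‖^2 = (n:ℝ) := by rw [← l2norm_sq, hxn, hsn2]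
  have hsum_y : ∑ k, ‖y k‖^2 = (n:ℝ) := by rw [← l2norm_sq, hyn, hsn2]
  have hαα : herm α α = ((A^2 : ℝ):ℂ) := by rw [herm_self α, ← l2norm_sq, ← hAdef]
  have hββ : herm β β = ((B^2 : ℝ):ℂ) := by rw [herm_self β, ← l2norm_sq, ← hBdef]
  -- a² + A² = 1
  have h1 : a^2 + A^2 = 1 := by
    have hxx : herm x x = ((n:ℝ):ℂ) := by rw [herm_self x, hsum_x]
    rw [hxe, herm_comb_left, herm_comb, herm_comb, hzz, hzα, hαz, hαα] at hxx
    simp only [mul_zero, add_zero, zero_mul, zero_add] at hxx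
    rw [hss] at hxx
    have h' : a * (a * (n:ℝ)) + (n:ℝ) * A^2 = n := by exact_mod_cast hxx
    have h'' : (a^2 + A^2 - 1) * (n:ℝ) = 0 := by linear_combination h'
    rcases mul_eq_zero.mp h'' with h3 | h3
    · linarith
    · exact absurd h3 (ne_of_gt hnpos)
  have h2 : b^2 + B^2 = 1 := by
    have hyy : herm y y = ((n:ℝ):ℂ) := by rw [herm_self y, hsum_y]
    rw [hye, herm_comb_left, herm_comb, herm_comb, hzz, hzβ, hβz, hββ] at hyy
    simp only [mul_zero, add_zero, zero_mul, zero_add] at hyy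
    rw [hss] at hyy
    have h' : b * (b * (n:ℝ)) + (n:ℝ) * B^2 = n := by exact_mod_cast hyy
    have h'' : (b^2 + B^2 - 1) * (n:ℝ) = 0 := by linear_combination h'
    rcases mul_eq_zero.mp h'' with h3 | h3
    · linarith
    · exact absurd h3 (ne_of_gt hnpos)
  have ha1 : a ≤ 1 := by nlinarith only [h1, ha, sq_nonneg A]
  have hb1 : b ≤ 1 := by nlinarith only [h2, hb, sq_nonneg B]
  -- a ≥ 1 - ε²/2 from d2 x z ≤ ε√n
  have key_close : ∀ (w : Fin n → ℂ) (t : ℝ), 0 ≤ t → t ≤ 1 →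
      herm z w = ((t * n : ℝ):ℂ) → (∑ k, ‖w k‖^2 = (n:ℝ)) →
      d2 w z ≤ ε * Real.sqrt n → 1 - ε^2/2 ≤ t := by
    intro w t ht ht1 hzw hsw hwz
    have hlow : Real.sqrt (2*n - 2*t*n) ≤ d2 w z := by
      apply le_d2
      intro φ
      have hexp : ∑ k, ‖Complex.exp ((φ:ℂ) * Complex.I) * w k - z k‖^2 =
          2*n - 2*(Complex.exp ((φ:ℂ) * Complex.I) * ((t * n : ℝ):ℂ)).re := by
        have := expand_sub (fun k => Complex.exp ((φ:ℂ) * Complex.I) * w k) z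
        rw [herm_smul, hzw] at this
        simp only [norm_mul, Complex.norm_exp_ofReal_mul_I, one_mul, mul_pow, one_pow] at this
        rw [this, hsw, hsum_z]; ring
      rw [l2norm]
      apply Real.sqrt_le_sqrt
      rw [hexp]
      have hre : (Complex.exp ((φ:ℂ) * Complex.I) * ((t * n : ℝ):ℂ)).re ≤ t * n := by
        have h1' := Complex.re_le_norm (Complex.exp ((φ:ℂ) * Complex.I) * ((t * n : ℝ):ℂ))
        rw [norm_mul, Complex.norm_exp_ofReal_mul_I, one_mul, Complex.norm_real, Real.norm_eq_abs,
          _root_.abs_of_nonneg (mul_nonneg ht hnpos.le)] at h1'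
        exact h1'
      linarith only [hre]
    have h0 : 0 ≤ 2*n - 2*t*n := by nlinarith only [mul_nonneg (by linarith only [ht1] : (0:ℝ) ≤ 1-t) hnpos.le]
    have h3 : Real.sqrt (2*n - 2*t*n) ≤ ε * Real.sqrt n := hlow.trans hwz
    have hsq : 2*n - 2*t*n ≤ ε^2 * n := by
      calc 2*n - 2*t*n = (Real.sqrt (2*n - 2*t*n))^2 := (Real.sq_sqrt h0).symm
        _ ≤ (ε * Real.sqrt n)^2 := pow_le_pow_left₀ (Real.sqrt_nonneg _) h3 2
        _ = ε^2 * n := by rw [mul_pow, hsn2]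
    have h4 : (2 - 2*t) * (n:ℝ) ≤ ε^2 * (n:ℝ) := by linarith only [hsq]
    have h5 : 2 - 2*t ≤ ε^2 := le_of_mul_le_mul_right h4 hnpos
    linarith only [h5]
  have haε : 1 - ε^2/2 ≤ a := key_close x a ha ha1 hzx hsum_x hxz
  have hbε : 1 - ε^2/2 ≤ b := key_close y b hb hb1 hzy hsum_y hyz
  -- inner product y* x
  set p := herm β α with hpdef
  clear_value p
  have hyx : herm y x = ((a*b*n : ℝ):ℂ) + ((n:ℝ):ℂ) * p := by
    rw [hxe, hye, herm_comb_left, herm_comb, herm_comb, hzz, hzα, hβz, hpdef]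
    simp only [mul_zero, add_zero, zero_mul, zero_add]
    rw [hss]
    push_cast
    ring
  set c := herm y x with hcdef
  clear_value c
  -- θ minimality: e*c = |c|
  have hsum_ex : ∀ (E : ℂ), ‖E‖ = 1 →
      ∑ k, ‖E * x k - y k‖^2 = 2*n - 2*(E * c).re := by
    intro E hE
    have h := expand_sub (fun k => E * x k) y
    rw [herm_smul] at h
    simp only [norm_mul, hE, one_mul, mul_pow, one_pow] at h
    rw [h, hsum_x, hsum_y, hcdef]; ring
  have hq0 : l2norm (fun k => e * x k - y k) ≤
      l2norm (fun k => Complex.exp (((-Complex.arg c : ℝ):ℂ) * Complex.I) * x k - y k) := by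
    rw [hθ]; exact d2_le x y _
  have hec_re : (e * c).re = ‖c‖ := by
    have hE0 : ‖Complex.exp (((-Complex.arg c : ℝ):ℂ) * Complex.I)‖ = 1 :=
      Complex.norm_exp_ofReal_mul_I _
    have hs1 := hsum_ex e heabs
    have hs2 := hsum_ex _ hE0
    rw [exp_neg_arg c] at hs2
    have hle : 2*n - 2*(e*c).re ≤ 2*n - 2*((‖c‖ : ℂ)).re := by
      have lhs_nn : (0:ℝ) ≤ ∑ k, ‖e * x k - y k‖^2 :=
        Finset.sum_nonneg fun k _ => sq_nonneg _
      have rhs_nn : (0:ℝ) ≤ ∑ k, ‖Complex.exp (((-Complex.arg c : ℝ):ℂ) * Complex.I) * x k - y k‖^2 :=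
        Finset.sum_nonneg fun k _ => sq_nonneg _
      rw [← hs1, ← hs2]
      have h1' : Real.sqrt (∑ k, ‖e * x k - y k‖^2) ≤
          Real.sqrt (∑ k, ‖Complex.exp (((-Complex.arg c : ℝ):ℂ) * Complex.I) * x k - y k‖^2) := hq0
      calc (∑ k, ‖e * x k - y k‖^2)
          = (Real.sqrt (∑ k, ‖e * x k - y k‖^2))^2 := (Real.sq_sqrt lhs_nn).symm
        _ ≤ (Real.sqrt (∑ k, ‖Complex.exp (((-Complex.arg c : ℝ):ℂ) * Complex.I) * x k - y k‖^2))^2 :=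
            pow_le_pow_left₀ (Real.sqrt_nonneg _) h1' 2
        _ = _ := Real.sq_sqrt rhs_nn
    have hge : ‖c‖ ≤ (e*c).re := by
      have : ((‖c‖ : ℂ)).re = ‖c‖ := Complex.ofReal_re _
      linarith only [hle, this.symm.le]
    have hle2 : (e*c).re ≤ ‖c‖ := by
      have := Complex.re_le_norm (e*c)
      rwa [norm_mul, heabs, one_mul] at this
    linarith
  have hec_im : (e * c).im = 0 := by
    have h := Complex.sq_norm (e*c)
    rw [norm_mul, heabs, one_mul, Complex.normSq_apply] at h
    have h2 : (e*c).im * (e*c).im = 0 := by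
      linear_combination (-1 : ℝ) * h - ((e*c).re + ‖c‖) * hec_re
    exact mul_self_eq_zero.mp h2
  -- translate to real equations with q = e*p
  set q := e * p with hqdef
  clear_value q
  have him : a*b*e.im + q.im = 0 := by
    have h : (e * c).im = (a*b*n) * e.im + n * q.im := by
      rw [hyx]
      simp [Complex.mul_im, Complex.add_im, Complex.add_re, Complex.mul_re,
        Complex.ofReal_re, Complex.ofReal_im, hqdef]
      ring
    rw [hec_im] at h
    have h2' : (n:ℝ) * (a*b*e.im + q.im) = 0 := by linarith only [h]
    rcases mul_eq_zero.mp h2' with h3 | h3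
    · exact absurd h3 (ne_of_gt hnpos)
    · exact h3
  have hre : 0 ≤ a*b*e.re + q.re := by
    have h : (e * c).re = (a*b*n) * e.re + n * q.re := by
      rw [hyx]
      simp [Complex.mul_im, Complex.add_im, Complex.add_re, Complex.mul_re,
        Complex.ofReal_re, Complex.ofReal_im, hqdef]
      ring
    have h0 : 0 ≤ (e*c).re := by rw [hec_re]; exact norm_nonneg c
    rw [h] at h0
    have h2' : 0 ≤ (n:ℝ) * (a*b*e.re + q.re) := by linarith only [h0]
    by_contra hcon
    push_neg at hcon
    have : (n:ℝ) * (a*b*e.re + q.re) < 0 := mul_neg_of_pos_of_neg hnpos hcon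
    linarith only [this, h2']
  -- bounds on q
  have hp_AB : ‖p‖ ≤ B * A := by
    rw [hpdef, hBdef, hAdef]; exact herm_cs β α
  have hq_abs : ‖q‖ = ‖p‖ := by rw [hqdef, norm_mul, heabs, one_mul]
  have hq_re_AB : |q.re| ≤ A * B := by
    have := Complex.abs_re_le_norm q
    rw [hq_abs] at this
    linarith only [hp_AB, this, (mul_comm B A : B*A = A*B)]
  have hq_im_AB : |q.im| ≤ A * B := by
    have := Complex.abs_im_le_norm q
    rw [hq_abs] at this
    linarith only [hp_AB, this, (mul_comm B A : B*A = A*B)]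
  have hq_im_BD : |q.im| ≤ B * D := by
    have hsplit := herm_sub β (fun k => e * α k) β
    rw [herm_smul, hββ, ← hpdef, ← hqdef] at hsplit
    have him_eq : (herm β (fun k => e * α k - β k)).im = q.im := by
      rw [hsplit]
      simp [Complex.sub_im, Complex.ofReal_im, ← Complex.ofReal_pow]
    rw [← him_eq]
    have h1' := Complex.abs_im_le_norm (herm β (fun k => e * α k - β k))
    have h2' := herm_cs β (fun k => e * α k - β k)
    rw [← hBdef, ← hDdef] at h2'
    linarith only [h1', h2']
  -- D² = A² + B² - 2 q.re
  have hD2 : D^2 = A^2 + B^2 - 2*q.re := by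
    rw [hDdef, l2norm_sq]
    have h := expand_sub (fun k => e * α k) β
    simp only [norm_mul, heabs, one_mul, mul_pow, one_pow] at h
    rw [h, ← l2norm_sq, ← l2norm_sq, ← hAdef, ← hBdef]
    have : herm β (fun k => e * α k) = q := by rw [herm_smul, hqdef, hpdef]
    rw [this]
  have key : a^2 + b^2 - 2*a*b*e.re ≤ (6*ε*D)^2 :=
    final_ineq a b ε A B D e.re e.im q.re q.im hε0 hε ha hb h1 h2 hA0 hB0 hD0
      haε hbε hrs him hre hq_re_AB hq_im_AB hq_im_BD hD2
  -- conclude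
  have habs_eq : ‖e * (a:ℂ) - (b:ℂ)‖ =
      Real.sqrt (a^2 + b^2 - 2*a*b*e.re) := by
    rw [Complex.norm_def, Complex.normSq_apply]
    congr 1
    simp only [Complex.sub_re, Complex.mul_re, Complex.sub_im, Complex.mul_im,
      Complex.ofReal_re, Complex.ofReal_im]
    linear_combination a^2 * hrs
  calc ‖e * (a:ℂ) - (b:ℂ)‖
      = Real.sqrt (a^2 + b^2 - 2*a*b*e.re) := habs_eq
    _ ≤ Real.sqrt ((6*ε*D)^2) := Real.sqrt_le_sqrt key
    _ = 6*ε*D := Real.sqrt_sq (by positivity)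


end PhaseSync
end
end
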